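/- Let δ < ω₁ be a limit ordinal and let y ∈ T with ht(y) = δ. Then every condition p ∈ Q(T) such that uᵖ contains an element x with ht(x) = δ has an extension q with y ∈ v^q; consequently the set ℰ_y = {q ∈ Q(T) : y ∈ v^q} is dense in Q(T). -/

import Mathlib

universe u

open Cardinal Ordinal Set Classical

noncomputable def omega1 : Ordinal.{u} := (Cardinal.aleph 1).ord

/-- Nodes: the root `none` together with the ordinals below `ω₁`. -/
abbrev Node : Type := Option omega1.{0}.ToType

/-- The ordinal below `ω₁` coded by an element of `omega1.toType`. -/
noncomputable def oVal (γ : omega1.{0}.ToType) : Ordinal.{0} :=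
  ((Ordinal.ToType.mk (o := omega1.{0})).symm γ : Set.Iio omega1.{0})

/-- `ht γ`: the unique `α` with `ω·α ≤ γ < ω·α + ω`, i.e. `γ / ω`; the root gets `⊥`,
regarded as smaller than every ordinal. -/
noncomputable def nodeHt : Node → WithBot Ordinal.{0}
  | none => ⊥
  | some γ => (↑(oVal γ / Ordinal.omega0) : WithBot Ordinal.{0})

def pLe {X : Type*} (lt : X → X → Prop) (a b : X) : Prop := lt a b ∨ a = b

/-- `m` is the meet (greatest common lower bound) of `x` and `y` inside `A`
with respect to the strict relation `lt`. -/
def IsMeetIn {X : Type*} (lt : X → X → Prop) (A : Set X) (x y m : X) : Prop :=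
  m ∈ A ∧ pLe lt m x ∧ pLe lt m y ∧ ∀ z ∈ A, pLe lt z x → pLe lt z y → pLe lt z m

/-- `lt` is a strict partial order with field inside `A`. -/
def StrictOrderOn {X : Type*} (A : Set X) (lt : X → X → Prop) : Prop :=
  (∀ x y, lt x y → x ∈ A ∧ y ∈ A) ∧ (∀ x, ¬ lt x x) ∧
    ∀ x y z, lt x y → lt y z → lt x z

/-- `lt` is a tree order on `A`: a strict partial order whose sets of strict
predecessors are well-ordered. -/
def TreeOrderOn {X : Type*} (A : Set X) (lt : X → X → Prop) : Prop :=
  StrictOrderOn A lt ∧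
  (∀ x ∈ A, ∀ y z, lt y x → lt z x → lt y z ∨ lt z y ∨ y = z) ∧
  ∀ x ∈ A, Set.WellFoundedOn {y | lt y x} lt

/-- The height of `x`: the order type of its set of strict `lt`-predecessors. -/
noncomputable def relHeight {X : Type u} (lt : X → X → Prop) (x : X) : Ordinal.{u} :=
  if h : IsWellOrder {y : X // lt y x} (fun a b => lt a.1 b.1) then @Ordinal.type _ _ h
  else 0

/-- `(A, lt)` is an Aronszajn tree: a tree of height `ω₁` with countable levels and no
uncountable chain. -/
def AronszajnOn {X : Type u} (A : Set X) (lt : X → X → Prop) : Prop :=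
  TreeOrderOn A lt ∧
  (∀ α : Ordinal.{u}, α < omega1.{u} → ∃ x ∈ A, relHeight lt x = α) ∧
  (∀ x ∈ A, relHeight lt x < omega1.{u}) ∧
  (∀ α : Ordinal.{u}, {x ∈ A | relHeight lt x = α}.Countable) ∧
  ∀ C ⊆ A, (∀ x ∈ C, ∀ y ∈ C, x ≠ y → lt x y ∨ lt y x) → C.Countable

/-- The ambient tree `T` of the forcing `Q(T)`: carrier `Tc ∋ none` (the root `r`),
strict order `ltT` with minimum the root, tree, heights of the nodes `γ ∈ S ⊆ ω₁`
equal to `γ / ω`, height `ω₁`, no uncountable chain, meets given by `meetT`. -/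
def AmbientOK (Tc : Set Node) (ltT : Node → Node → Prop)
    (meetT : Node → Node → Node) : Prop :=
  none ∈ Tc ∧
  StrictOrderOn Tc ltT ∧
  (∀ x ∈ Tc, x ≠ none → ltT none x) ∧
  (∀ x ∈ Tc, ∀ y z, ltT y x → ltT z x → ltT y z ∨ ltT z y ∨ y = z) ∧
  (∀ x ∈ Tc, Set.WellFoundedOn {y | ltT y x} ltT) ∧
  (∀ γ : omega1.{0}.ToType, some γ ∈ Tc →
      relHeight (fun a b => ltT a b ∧ a ≠ none) (some γ) = oVal γ / Ordinal.omega0) ∧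
  (∀ α : Ordinal.{0}, α < omega1.{0} →
      ∃ γ : omega1.{0}.ToType, some γ ∈ Tc ∧ oVal γ / Ordinal.omega0 = α) ∧
  (∀ C ⊆ Tc, (∀ x ∈ C, ∀ y ∈ C, x ≠ y → ltT x y ∨ ltT y x) → C.Countable) ∧
  ∀ x ∈ Tc, ∀ y ∈ Tc, IsMeetIn ltT Tc x y (meetT x y)

/-- A condition of the forcing `Q(T)`. -/
structure QCond : Type 1 where
  u : Finset Node
  v : Finset Node
  lt : Node → Node → Prop
  c : Node → Node → Option ℕ

/-- The requirements making `p` a condition of `Q(T)`. -/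
structure QValid (Tc : Set Node) (ltT : Node → Node → Prop)
    (meetT : Node → Node → Node) (p : QCond) : Prop where
  root_u : none ∈ p.u
  root_v : none ∈ p.v
  v_sub : ∀ y ∈ p.v, y ∈ Tc
  v_ht : ∀ y ∈ p.v, ∃ x ∈ p.u, nodeHt x = nodeHt y
  lt_dom : ∀ x y : Node, p.lt x y → x ∈ p.u ∧ y ∈ p.u
  lt_irrefl : ∀ x : Node, ¬ p.lt x x
  lt_trans : ∀ x y z : Node, p.lt x y → p.lt y z → p.lt x z
  lt_root : ∀ x ∈ p.u, x ≠ none → p.lt none x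
  lt_ht : ∀ x y : Node, p.lt x y → nodeHt x < nodeHt y
  lt_pred_linear : ∀ x y z : Node, p.lt x z → p.lt y z → p.lt x y ∨ p.lt y x ∨ x = y
  lt_meet : ∀ x ∈ p.u, ∀ y ∈ p.u, ∃ m : Node, IsMeetIn p.lt ↑p.u x y m
  c_dom : ∀ x y : Node, p.c x y ≠ none ↔
    (x ∈ p.u ∧ y ∈ p.v ∧ nodeHt x = nodeHt y ∧
      ∃ δ : Ordinal.{0}, Order.IsSuccLimit δ ∧ nodeHt x = (↑δ : WithBot Ordinal.{0}))
  c_spec : ∀ x₁ y₁ x₂ y₂ : Node, ∀ n : ℕ, p.c x₁ y₁ = some n → p.c x₂ y₂ = some n →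
    ¬ (x₁ = x₂ ∧ y₁ = y₂) →
      nodeHt x₁ ≠ nodeHt x₂ ∧
      (¬ p.lt x₁ x₂ ∧ ¬ p.lt x₂ x₁ ∧ x₁ ≠ x₂) ∧
      (¬ ltT y₁ y₂ ∧ ¬ ltT y₂ y₁ ∧ y₁ ≠ y₂) ∧
      ∀ m : Node, IsMeetIn p.lt ↑p.u x₁ x₂ m → nodeHt (meetT y₁ y₂) < nodeHt m

/-- The extension order of `Q(T)`. -/
def QLe (p q : QCond) : Prop :=
  p.u ⊆ q.u ∧ p.v ⊆ q.v ∧ (∀ x y : Node, p.lt x y → q.lt x y) ∧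
  (∀ x y : Node, ∀ n : ℕ, p.c x y = some n → q.c x y = some n) ∧
  ∀ x ∈ p.u, ∀ y ∈ p.u, ∀ m : Node,
    IsMeetIn p.lt ↑p.u x y m → IsMeetIn q.lt ↑q.u x y m

section MyAux

variable {Tc : Set Node} {ltT : Node → Node → Prop} {meetT : Node → Node → Node}

lemma myQLe_refl (p : QCond) : QLe p p :=
  ⟨subset_rfl, subset_rfl, fun _ _ h => h, fun _ _ _ h => h, fun _ _ _ _ _ h => h⟩

lemma myQLe_trans {p q r : QCond} (h1 : QLe p q) (h2 : QLe q r) : QLe p r := by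
  obtain ⟨a1, b1, c1, d1, e1⟩ := h1
  obtain ⟨a2, b2, c2, d2, e2⟩ := h2
  exact ⟨a1.trans a2, b1.trans b2, fun x y h => c2 x y (c1 x y h),
    fun x y n h => d2 x y n (d1 x y n h),
    fun x hx y hy m hm => e2 x (a1 hx) y (a1 hy) m (e1 x hx y hy m hm)⟩

/-- Main step: if `p.u` already has an element of height `δ`, we can add `y` to `p.v`. -/
lemma myStep1 (δ : Ordinal.{0}) (hδlim : Order.IsSuccLimit δ)
    (y : Node) (hy : y ∈ Tc) (hyht : nodeHt y = (↑δ : WithBot Ordinal.{0}))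
    (p : QCond) (hp : QValid Tc ltT meetT p)
    (hx : ∃ x ∈ p.u, nodeHt x = (↑δ : WithBot Ordinal.{0})) :
    ∃ q : QCond, QValid Tc ltT meetT q ∧ QLe p q ∧ y ∈ q.v := by
  classical
  by_cases hyv : y ∈ p.v
  · exact ⟨p, hp, myQLe_refl p, hyv⟩
  -- a bound beyond all used colours
  set N : ℕ :=
    ((p.u ×ˢ p.v).image (fun ab : Node × Node => (p.c ab.1 ab.2).getD 0)).sup id + 1 with hNdef
  have hbound : ∀ a b n, p.c a b = some n → n < N := by
    intro a b n h
    have hd := (hp.c_dom a b).mp (by simp [h])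
    have hmem : (a, b) ∈ p.u ×ˢ p.v := Finset.mem_product.mpr ⟨hd.1, hd.2.1⟩
    have hmem2 : n ∈ ((p.u ×ˢ p.v).image (fun ab : Node × Node => (p.c ab.1 ab.2).getD 0)) := by
      refine Finset.mem_image.mpr ⟨(a, b), hmem, ?_⟩
      simp [h]
    have := Finset.le_sup (f := id) hmem2
    simp only [id] at this
    omega
  -- an injection of `p.u` into ℕ
  set idx : Node → ℕ := fun a => if h : a ∈ p.u then (p.u.equivFin ⟨a, h⟩ : Fin _).val else 0
    with hidxdef
  have hidx : ∀ a ∈ p.u, ∀ b ∈ p.u, idx a = idx b → a = b := by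
    intro a ha b hb h
    have : ((p.u.equivFin ⟨a, ha⟩ : Fin _) : ℕ) = ((p.u.equivFin ⟨b, hb⟩ : Fin _) : ℕ) := by
      simpa [hidxdef, ha, hb] using h
    have h2 := p.u.equivFin.injective (Fin.ext this)
    exact Subtype.ext_iff.mp h2
  -- the new condition
  set P : Node → Node → Prop :=
    fun a b => b = y ∧ a ∈ p.u ∧ nodeHt a = (↑δ : WithBot Ordinal.{0}) with hPdef
  set q : QCond := ⟨p.u, insert y p.v, p.lt,
    fun a b => if P a b then some (N + idx a) else p.c a b⟩ with hqdef
  have hcy_none : ∀ a, p.c a y = none := by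
    intro a
    by_contra hne
    exact hyv ((hp.c_dom a y).mp hne).2.1
  have hqc_new : ∀ a b, P a b → q.c a b = some (N + idx a) := by
    intro a b h; simp only [hqdef, if_pos h]
  have hqc_old : ∀ a b, ¬ P a b → q.c a b = p.c a b := by
    intro a b h; simp only [hqdef, if_neg h]
  have hvq : ∀ b, b ∈ q.v ↔ b = y ∨ b ∈ p.v := by
    intro b; simp [hqdef, Finset.mem_insert]
  refine ⟨q, ?_, ?_, ?_⟩
  · constructor
    · exact hp.root_u
    · exact Finset.mem_insert_of_mem hp.root_v
    · intro b hb
      rcases (hvq b).mp hb with h | h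
      · exact h ▸ hy
      · exact hp.v_sub b h
    · intro b hb
      rcases (hvq b).mp hb with h | h
      · obtain ⟨x, hxu, hxht⟩ := hx
        exact ⟨x, hxu, by rw [hxht, h, hyht]⟩
      · exact hp.v_ht b h
    · exact hp.lt_dom
    · exact hp.lt_irrefl
    · exact hp.lt_trans
    · exact hp.lt_root
    · exact hp.lt_ht
    · exact hp.lt_pred_linear
    · exact hp.lt_meet
    · intro a b
      by_cases hb : b = y
      · by_cases h : a ∈ p.u ∧ nodeHt a = (↑δ : WithBot Ordinal.{0})
        · rw [hqc_new a b ⟨hb, h.1, h.2⟩]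
          constructor
          · intro _
            refine ⟨h.1, ?_, ?_, δ, hδlim, h.2⟩
            · rw [hb]; exact Finset.mem_insert_self _ _
            · rw [hb, hyht]; exact h.2
          · intro _; simp
        · have hPn : ¬ P a b := by
            intro hP; exact h ⟨hP.2.1, hP.2.2⟩
          rw [hqc_old a b hPn, hb, hcy_none a]
          constructor
          · intro hc; exact absurd rfl hc
          · rintro ⟨ha, _, hht, _⟩
            exact absurd ⟨ha, by rw [hht, hyht]⟩ h
      · have hPn : ¬ P a b := fun hP => hb hP.1
        rw [hqc_old a b hPn, hp.c_dom]
        constructor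
        · rintro ⟨h1, h2, h3⟩; exact ⟨h1, Finset.mem_insert_of_mem h2, h3⟩
        · rintro ⟨h1, h2, h3⟩
          rcases Finset.mem_insert.mp h2 with h | h
          · exact absurd h hb
          · exact ⟨h1, h, h3⟩
    · intro x₁ y₁ x₂ y₂ n h1 h2 hne
      by_cases H1 : P x₁ y₁
      · by_cases H2 : P x₂ y₂
        · exfalso
          rw [hqc_new _ _ H1] at h1
          rw [hqc_new _ _ H2] at h2
          have e1 : N + idx x₁ = n := Option.some_injective ℕ h1
          have e2 : N + idx x₂ = n := Option.some_injective ℕ h2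
          have : idx x₁ = idx x₂ := by omega
          exact hne ⟨hidx x₁ H1.2.1 x₂ H2.2.1 this, H1.1.trans H2.1.symm⟩
        · exfalso
          rw [hqc_new _ _ H1] at h1
          rw [hqc_old _ _ H2] at h2
          have e1 : N + idx x₁ = n := Option.some_injective ℕ h1
          have := hbound _ _ _ h2
          omega
      · by_cases H2 : P x₂ y₂
        · exfalso
          rw [hqc_old _ _ H1] at h1
          rw [hqc_new _ _ H2] at h2
          have e2 : N + idx x₂ = n := Option.some_injective ℕ h2
          have := hbound _ _ _ h1
          omega
        · rw [hqc_old _ _ H1] at h1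
          rw [hqc_old _ _ H2] at h2
          exact hp.c_spec x₁ y₁ x₂ y₂ n h1 h2 hne
  · refine ⟨subset_rfl, Finset.subset_insert _ _, fun _ _ h => h, ?_, fun _ _ _ _ _ h => h⟩
    intro a b n h
    have hPn : ¬ P a b := by
      rintro ⟨rfl, -, -⟩
      rw [hcy_none a] at h
      cases h
    rw [hqc_old a b hPn]; exact h
  · exact Finset.mem_insert_self _ _

/-- If `p.u` has no element of height `δ`, add one just above the root. -/
lemma myStep2 (hT : AmbientOK Tc ltT meetT) (δ : Ordinal.{0}) (hδ : δ < omega1.{0})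
    (p : QCond) (hp : QValid Tc ltT meetT p)
    (hno : ∀ x ∈ p.u, nodeHt x ≠ (↑δ : WithBot Ordinal.{0})) :
    ∃ q : QCond, QValid Tc ltT meetT q ∧ QLe p q ∧
      ∃ x ∈ q.u, nodeHt x = (↑δ : WithBot Ordinal.{0}) := by
  classical
  obtain ⟨γ, hγT, hγ⟩ := hT.2.2.2.2.2.2.1 δ hδ
  set x : Node := some γ with hxdef
  have hxht : nodeHt x = (↑δ : WithBot Ordinal.{0}) := by
    show (↑(oVal γ / Ordinal.omega0) : WithBot Ordinal.{0}) = ↑δ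
    rw [hγ]
  have hxnot : x ∉ p.u := fun h => hno x h hxht
  have hxne : x ≠ none := Option.some_ne_none γ
  clear_value x
  set lt' : Node → Node → Prop := fun a b => p.lt a b ∨ (a = none ∧ b = x) with hlt'def
  have hno_to_x : ∀ a, ¬ p.lt a x := fun a h => hxnot (hp.lt_dom a x h).2
  have hno_from_x : ∀ b, ¬ p.lt x b := fun b h => hxnot (hp.lt_dom x b h).1
  have hno_to_none : ∀ a, ¬ p.lt a none := by
    intro a h
    have := hp.lt_ht a none h
    exact absurd this (not_lt_bot)
  set q : QCond := ⟨insert x p.u, p.v, lt', p.c⟩ with hqdef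
  -- helpers
  have hx_not_le : ∀ a ∈ p.u, ¬ pLe lt' x a := by
    rintro a ha (h | he)
    · rcases h with h | ⟨h1, -⟩
      · exact hno_from_x a h
      · exact hxne h1
    · exact hxnot (he ▸ ha)
  have hdown : ∀ w a, a ∈ p.u → pLe lt' w a → pLe p.lt w a := by
    rintro w a ha (h | he)
    · rcases h with h | ⟨-, h2⟩
      · exact Or.inl h
      · exact absurd (h2 ▸ ha) hxnot
    · exact Or.inr he
  have hup : ∀ w a, pLe p.lt w a → pLe lt' w a := by
    rintro w a (h | he)
    · exact Or.inl (Or.inl h)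
    · exact Or.inr he
  have hmeet_lift : ∀ a ∈ p.u, ∀ b ∈ p.u, ∀ m, IsMeetIn p.lt ↑p.u a b m →
      IsMeetIn lt' ↑(insert x p.u) a b m := by
    rintro a ha b hb m ⟨hm, hma, hmb, hgr⟩
    refine ⟨Finset.mem_coe.mpr (Finset.mem_insert_of_mem (Finset.mem_coe.mp hm)),
      hup _ _ hma, hup _ _ hmb, ?_⟩
    intro z hz hza hzb
    rcases Finset.mem_insert.mp (Finset.mem_coe.mp hz) with hz1 | hz2
    · exact absurd (hz1 ▸ hza) (hx_not_le a ha)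
    · exact hup _ _ (hgr z hz2 (hdown _ _ ha hza) (hdown _ _ hb hzb))
  have hmeet_down : ∀ a ∈ p.u, ∀ b ∈ p.u, ∀ m, IsMeetIn lt' ↑(insert x p.u) a b m →
      IsMeetIn p.lt ↑p.u a b m := by
    rintro a ha b hb m ⟨hm, hma, hmb, hgr⟩
    have hmu : m ∈ p.u := by
      rcases Finset.mem_insert.mp (Finset.mem_coe.mp hm) with h | h
      · exact absurd (h ▸ hma) (hx_not_le a ha)
      · exact h
    refine ⟨hmu, hdown _ _ ha hma, hdown _ _ hb hmb, ?_⟩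
    intro z hz hza hzb
    exact hdown _ _ hmu
      (hgr z (Finset.mem_coe.mpr (Finset.mem_insert_of_mem hz)) (hup _ _ hza) (hup _ _ hzb))
  refine ⟨q, ?_, ?_, x, Finset.mem_insert_self _ _, hxht⟩
  · constructor
    · exact Finset.mem_insert_of_mem hp.root_u
    · exact hp.root_v
    · exact hp.v_sub
    · intro b hb
      obtain ⟨w, hw, hwht⟩ := hp.v_ht b hb
      exact ⟨w, Finset.mem_insert_of_mem hw, hwht⟩
    · rintro a b (h | ⟨ha1, hb1⟩)
      · exact ⟨Finset.mem_insert_of_mem (hp.lt_dom a b h).1,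
          Finset.mem_insert_of_mem (hp.lt_dom a b h).2⟩
      · rw [ha1, hb1]
        exact ⟨Finset.mem_insert_of_mem hp.root_u, Finset.mem_insert_self _ _⟩
    · rintro a (h | ⟨h1, h2⟩)
      · exact hp.lt_irrefl a h
      · exact hxne (h1 ▸ h2.symm ▸ rfl)
    · rintro a b z (h1 | ⟨hb1, hz1⟩) (h2 | ⟨hb2, hz2⟩)
      · exact Or.inl (hp.lt_trans a b z h1 h2)
      · rw [hb2] at h1; exact absurd h1 (hno_to_none a)
      · rw [hz1] at h2; exact absurd h2 (hno_from_x z)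
      · exact Or.inr ⟨hb1, hz2⟩
    · intro a ha hane
      rcases Finset.mem_insert.mp ha with h | h
      · exact Or.inr ⟨rfl, h⟩
      · exact Or.inl (hp.lt_root a h hane)
    · rintro a b (h | ⟨ha1, hb1⟩)
      · exact hp.lt_ht a b h
      · rw [ha1, hb1, hxht]
        show nodeHt none < _
        exact bot_lt_iff_ne_bot.mpr (by simp)
    · rintro a b z (h1 | ⟨ha1, hz1⟩) (h2 | ⟨hb1, hz2⟩)
      · rcases hp.lt_pred_linear a b z h1 h2 with h | h | h
        · exact Or.inl (Or.inl h)
        · exact Or.inr (Or.inl (Or.inl h))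
        · exact Or.inr (Or.inr h)
      · rw [hz2] at h1; exact absurd h1 (hno_to_x a)
      · rw [hz1] at h2; exact absurd h2 (hno_to_x b)
      · rw [ha1, hb1]; exact Or.inr (Or.inr rfl)
    · intro a ha b hb
      rcases Finset.mem_insert.mp ha with ha1 | ha2
      · rcases Finset.mem_insert.mp hb with hb1 | hb2
        · rw [ha1, hb1]
          exact ⟨x, Finset.mem_coe.mpr (Finset.mem_insert_self _ _),
            Or.inr rfl, Or.inr rfl, fun z _ hz _ => hz⟩
        · rw [ha1]
          refine ⟨none, Finset.mem_coe.mpr (Finset.mem_insert_of_mem hp.root_u),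
            Or.inl (Or.inr ⟨rfl, rfl⟩), ?_, ?_⟩
          · by_cases hbn : b = none
            · exact Or.inr hbn.symm
            · exact Or.inl (Or.inl (hp.lt_root b hb2 hbn))
          · intro z hz hzx hzb
            rcases hzx with hl | he
            · rcases hl with h | ⟨h1, -⟩
              · exact absurd h (hno_to_x z)
              · exact Or.inr h1
            · exact absurd (he ▸ hzb) (hx_not_le b hb2)
      · rcases Finset.mem_insert.mp hb with hb1 | hb2
        · rw [hb1]
          refine ⟨none, Finset.mem_coe.mpr (Finset.mem_insert_of_mem hp.root_u),
            ?_, Or.inl (Or.inr ⟨rfl, rfl⟩), ?_⟩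
          · by_cases han : a = none
            · exact Or.inr han.symm
            · exact Or.inl (Or.inl (hp.lt_root a ha2 han))
          · intro z hz hza hzb
            rcases hzb with hl | he
            · rcases hl with h | ⟨h1, -⟩
              · exact absurd h (hno_to_x z)
              · exact Or.inr h1
            · exact absurd (he ▸ hza) (hx_not_le a ha2)
        · obtain ⟨m, hm⟩ := hp.lt_meet a ha2 b hb2
          exact ⟨m, hmeet_lift a ha2 b hb2 m hm⟩
    · intro a b
      constructor
      · intro h
        obtain ⟨h1, h2, h3⟩ := (hp.c_dom a b).mp h
        exact ⟨Finset.mem_insert_of_mem h1, h2, h3⟩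
      · rintro ⟨h1, h2, h3, h4⟩
        rcases Finset.mem_insert.mp h1 with h | h
        · exfalso
          obtain ⟨w, hw, hwht⟩ := hp.v_ht b h2
          exact hno w hw (by rw [hwht, ← h3, h, hxht])
        · exact (hp.c_dom a b).mpr ⟨h, h2, h3, h4⟩
    · intro x₁ y₁ x₂ y₂ n h1 h2 hne
      have h1' : p.c x₁ y₁ = some n := h1
      have h2' : p.c x₂ y₂ = some n := h2
      have hx₁ : x₁ ∈ p.u := ((hp.c_dom x₁ y₁).mp (by simp [h1'])).1
      have hx₂ : x₂ ∈ p.u := ((hp.c_dom x₂ y₂).mp (by simp [h2'])).1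
      obtain ⟨c1, c2, c3, c4⟩ := hp.c_spec x₁ y₁ x₂ y₂ n h1' h2' hne
      refine ⟨c1, ?_, c3, ?_⟩
      · refine ⟨?_, ?_, c2.2.2⟩
        · rintro (h | ⟨-, h2'⟩)
          · exact c2.1 h
          · exact hxnot (h2' ▸ hx₂)
        · rintro (h | ⟨-, h2'⟩)
          · exact c2.2.1 h
          · exact hxnot (h2' ▸ hx₁)
      · intro m hm
        exact c4 m (hmeet_down x₁ hx₁ x₂ hx₂ m hm)
  · exact ⟨Finset.subset_insert _ _, subset_rfl, fun a b h => Or.inl h,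
      fun _ _ _ h => h, hmeet_lift⟩

end MyAux

/-- For `δ < ω₁` limit and `y ∈ T` of height `δ`: every condition whose first part has an
element of height `δ` extends to one with `y` in its second part; consequently
`ℰ_y = {q : y ∈ v^q}` is dense in `Q(T)`. -/
theorem QCond_dense_Ey (Tc : Set Node) (ltT : Node → Node → Prop)
    (meetT : Node → Node → Node) (hT : AmbientOK Tc ltT meetT)
    (δ : Ordinal.{0}) (hδlim : Order.IsSuccLimit δ) (hδ : δ < omega1.{0})
    (y : Node) (hy : y ∈ Tc) (hyht : nodeHt y = (↑δ : WithBot Ordinal.{0})) :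
    (∀ p : QCond, QValid Tc ltT meetT p →
      (∃ x ∈ p.u, nodeHt x = (↑δ : WithBot Ordinal.{0})) →
      ∃ q : QCond, QValid Tc ltT meetT q ∧ QLe p q ∧ y ∈ q.v) ∧
    ∀ p : QCond, QValid Tc ltT meetT p →
      ∃ q : QCond, QValid Tc ltT meetT q ∧ QLe p q ∧ y ∈ q.v := by
  have main := myStep1 (Tc := Tc) (ltT := ltT) (meetT := meetT) δ hδlim y hy hyht
  refine ⟨main, ?_⟩
  intro p hp
  by_cases h : ∃ x ∈ p.u, nodeHt x = (↑δ : WithBot Ordinal.{0})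
  · exact main p hp h
  · push_neg at h
    obtain ⟨p', hp', hle, hx⟩ := myStep2 hT δ hδ p hp h
    obtain ⟨q, hq, hle2, hyv⟩ := main p' hp' hx
    exact ⟨q, hq, myQLe_trans hle hle2, hyv⟩
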